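/- The leading term of the variance of the plug-in entropy estimator satisfies n · Var(\hat{H}) → Σ_j p_j ln^2 p_j - H^2 as n → ∞; in particular, if all p_j are equal (p_j = 1/M), this limit is zero. -/

import Mathlib

open Finset Real

/-- Probability of the outcome `f` under the multinomial distribution with
`n` trials and cell probabilities `p`. -/
noncomputable def multProb {M : ℕ} (p : Fin M → ℝ) (f : Fin M → ℕ) : ℝ :=
  (Nat.multinomial Finset.univ f : ℝ) * ∏ j, p j ^ f j

/-- Plug-in (empirical frequencies) Shannon entropy of the outcome `f`
(natural logarithm, convention `0 ln 0 = 0` since `Real.log 0 = 0`). -/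
noncomputable def plugInEntropy {M : ℕ} (n : ℕ) (f : Fin M → ℕ) : ℝ :=
  -∑ j, ((f j : ℝ) / (n : ℝ)) * Real.log ((f j : ℝ) / (n : ℝ))

/-- `E[Ĥ]` for the multinomial plug-in entropy estimator. -/
noncomputable def expEntropy (M n : ℕ) (p : Fin M → ℝ) : ℝ :=
  ∑ f ∈ Finset.Nat.antidiagonalTuple M n, multProb p f * plugInEntropy n f

/-- `Var(Ĥ)` for the multinomial plug-in entropy estimator. -/
noncomputable def varEntropy (M n : ℕ) (p : Fin M → ℝ) : ℝ :=
  (∑ f ∈ Finset.Nat.antidiagonalTuple M n, multProb p f * (plugInEntropy n f) ^ 2)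
    - (expEntropy M n p) ^ 2

/-- Shannon entropy of the probability vector `p` (natural logarithm). -/
noncomputable def shannonH {M : ℕ} (p : Fin M → ℝ) : ℝ :=
  -∑ j, p j * Real.log (p j)


namespace VarEnt
variable {M : ℕ} (p : Fin M → ℝ)

noncomputable def Exp (n : ℕ) (g : (Fin n → Fin M) → ℝ) : ℝ :=
  ∑ ω : Fin n → Fin M, (∏ i, p (ω i)) * g ω

lemma Exp_cons (n : ℕ) (g : (Fin (n+1) → Fin M) → ℝ) :
    Exp p (n+1) g = ∑ k, p k * Exp p n (fun ω => g (Fin.cons k ω)) := by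
  rw [Exp, ← (Fin.consEquiv (fun _ => Fin M)).sum_comp
    (fun ω : Fin (n+1) → Fin M => (∏ i, p (ω i)) * g ω), Fintype.sum_prod_type]
  simp only [Exp, Finset.mul_sum]
  refine Finset.sum_congr rfl fun k _ => Finset.sum_congr rfl fun ω _ => ?_
  have hc : (Fin.consEquiv (fun _ => Fin M)) (k, ω) = Fin.cons k ω := rfl
  rw [hc]
  have : ∏ i : Fin (n+1), p ((Fin.cons k ω : Fin (n+1) → Fin M) i)
      = p k * ∏ i, p (ω i) := by
    rw [Fin.prod_univ_succ]; simp
  rw [this]; ring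

def cnt (n : ℕ) (ω : Fin n → Fin M) : Fin M → ℕ := fun j => ∑ i, if ω i = j then 1 else 0

def addk (k : Fin M) (f : Fin M → ℕ) : Fin M → ℕ := fun j => f j + if j = k then 1 else 0

def subk (k : Fin M) (F : Fin M → ℕ) : Fin M → ℕ := fun j => F j - if j = k then 1 else 0

lemma cnt_cons (n : ℕ) (k : Fin M) (ω : Fin n → Fin M) :
    cnt (n+1) (Fin.cons k ω : Fin (n+1) → Fin M) = addk k (cnt n ω) := by
  funext j
  simp only [cnt, addk]
  rw [Fin.sum_univ_succ]
  simp only [Fin.cons_zero, Fin.cons_succ]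
  have : (if k = j then 1 else 0) = if j = k then 1 else 0 := by
    by_cases h : j = k
    · simp [h]
    · rw [if_neg h, if_neg (fun hh : k = j => h hh.symm)]
  rw [this]
  omega

lemma Exp_zero (g : (Fin 0 → Fin M) → ℝ) : Exp p 0 g = g (fun i => i.elim0) := by
  rw [Exp, Fintype.sum_eq_single (fun i : Fin 0 => i.elim0)
    (fun ω h => absurd (Subsingleton.elim ω _) h)]
  simp

lemma sum_addk (k : Fin M) (f : Fin M → ℕ) : ∑ j, addk k f j = (∑ j, f j) + 1 := by
  simp only [addk, Finset.sum_add_distrib, Finset.sum_ite_eq' Finset.univ k (fun _ => 1)]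
  simp

lemma sum_subk (F : Fin M → ℕ) (k : Fin M) (hk : 1 ≤ F k) (n : ℕ)
    (hF : ∑ j, F j = n + 1) : ∑ j, subk k F j = n := by
  have : ∑ j, subk k F j + ∑ j, (if j = k then 1 else 0) = ∑ j, F j := by
    rw [← Finset.sum_add_distrib]
    refine Finset.sum_congr rfl fun j _ => ?_
    by_cases hj : j = k
    · subst hj; simp [subk]; omega
    · simp [subk, hj]
  rw [Finset.sum_ite_eq' Finset.univ k (fun _ => 1)] at this
  simp at this
  omega

lemma subk_addk (k : Fin M) (f : Fin M → ℕ) : subk k (addk k f) = f := by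
  funext j; by_cases hj : j = k <;> simp [subk, addk, hj]

lemma addk_subk (k : Fin M) (F : Fin M → ℕ) (hk : 1 ≤ F k) : addk k (subk k F) = F := by
  funext j
  by_cases hj : j = k
  · subst hj; simp [subk, addk]; omega
  · simp [subk, addk, hj]

lemma multinomial_cast (G : Fin M → ℕ) :
    (Nat.multinomial Finset.univ G : ℝ) = Nat.factorial (∑ j, G j) / ∏ j, ((Nat.factorial (G j)) : ℝ) := by
  rw [eq_div_iff (by positivity)]
  rw [mul_comm]
  exact_mod_cast congrArg (Nat.cast : ℕ → ℝ) (Nat.multinomial_spec Finset.univ G)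

lemma prod_factorial_subk (F : Fin M → ℕ) (k : Fin M) (hk : 1 ≤ F k) :
    (∏ j, ((Nat.factorial (subk k F j)) : ℝ)) * F k = ∏ j, ((Nat.factorial (F j)) : ℝ) := by
  have : ∀ j : Fin M, ((Nat.factorial (F j)) : ℝ) = ((Nat.factorial (subk k F j)) : ℝ) * (if j = k then (F k : ℝ) else 1) := by
    intro j
    by_cases hj : j = k
    · subst hj
      simp only [subk, if_pos rfl, if_true]
      rw [show ((Nat.factorial (F j) : ℕ) : ℝ) = ((F j * Nat.factorial (F j - 1) : ℕ) : ℝ)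
        from congrArg _ (Nat.mul_factorial_pred (Nat.pos_iff_ne_zero.mp hk)).symm]
      push_cast
      ring
    · simp [subk, hj]
  rw [Finset.prod_congr rfl (fun j _ => this j), Finset.prod_mul_distrib,
    Finset.prod_ite_eq' Finset.univ k (fun _ => (F k : ℝ))]
  simp

lemma prod_pow_subk (F : Fin M → ℕ) (k : Fin M) (hk : 1 ≤ F k) :
    (∏ j, p j ^ subk k F j) * p k = ∏ j, p j ^ F j := by
  have : ∀ j : Fin M, p j ^ F j = p j ^ subk k F j * (if j = k then p k else 1) := by
    intro j
    by_cases hj : j = k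
    · subst hj
      simp only [subk, if_pos rfl, if_true]
      rw [← pow_succ]
      congr 1
      omega
    · simp [subk, hj]
  rw [Finset.prod_congr rfl (fun j _ => this j), Finset.prod_mul_distrib,
    Finset.prod_ite_eq' Finset.univ k (fun _ => p k)]
  simp

lemma pascal_mult (F : Fin M → ℕ) (n : ℕ) (hF : ∑ j, F j = n + 1) :
    ∑ k ∈ Finset.univ.filter (fun k => 1 ≤ F k), (Nat.multinomial Finset.univ (subk k F) : ℝ)
      = (Nat.multinomial Finset.univ F : ℝ) := by
  have hprodF : (0:ℝ) < ∏ j, ((Nat.factorial (F j)) : ℝ) := by positivity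
  have key : ∀ k ∈ Finset.univ.filter (fun k => 1 ≤ F k),
      (Nat.multinomial Finset.univ (subk k F) : ℝ)
        = ((Nat.factorial n : ℕ) : ℝ) * F k / ∏ j, ((Nat.factorial (F j)) : ℝ) := by
    intro k hk
    rw [Finset.mem_filter] at hk
    have hP : (0:ℝ) < ∏ j, ((Nat.factorial (subk k F j)) : ℝ) := by positivity
    have hFk : (0:ℝ) < (F k : ℝ) := by exact_mod_cast hk.2
    rw [multinomial_cast, sum_subk F k hk.2 n hF, eq_div_iff (ne_of_gt hprodF),
      ← prod_factorial_subk F k hk.2]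
    field_simp
  rw [Finset.sum_congr rfl key]
  rw [← Finset.sum_div]
  rw [multinomial_cast, hF]
  congr 1
  have : ∑ k ∈ Finset.univ.filter (fun k => 1 ≤ F k), ((Nat.factorial n : ℕ) : ℝ) * F k
      = ((Nat.factorial n : ℕ) : ℝ) * ∑ k ∈ Finset.univ.filter (fun k => 1 ≤ F k), (F k : ℝ) := by
    rw [Finset.mul_sum]
  rw [this]
  have : ∑ k ∈ Finset.univ.filter (fun k => 1 ≤ F k), (F k : ℝ) = ∑ k, (F k : ℝ) := by
    refine Finset.sum_filter_of_ne fun k _ hne => ?_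
    rcases Nat.eq_zero_or_pos (F k) with h0 | h0
    · simp [h0] at hne
    · exact h0
  rw [this]
  have : ∑ k, (F k : ℝ) = (n : ℝ) + 1 := by exact_mod_cast congrArg (Nat.cast : ℕ → ℝ) hF
  rw [this, Nat.factorial_succ]
  push_cast
  ring

lemma pascal_prob (F : Fin M → ℕ) (n : ℕ) (hF : ∑ j, F j = n + 1) :
    ∑ k, (if 1 ≤ F k then p k * multProb p (subk k F) else 0) = multProb p F := by
  rw [Finset.sum_ite, Finset.sum_const_zero, add_zero]
  have key : ∀ k ∈ Finset.univ.filter (fun k => 1 ≤ F k),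
      p k * multProb p (subk k F)
        = (Nat.multinomial Finset.univ (subk k F) : ℝ) * ∏ j, p j ^ F j := by
    intro k hk
    rw [Finset.mem_filter] at hk
    rw [multProb, ← prod_pow_subk p F k hk.2]
    ring
  rw [Finset.sum_congr rfl key, ← Finset.sum_mul, pascal_mult F n hF, multProb]


lemma bridge (n : ℕ) (g : (Fin M → ℕ) → ℝ) :
    ∑ f ∈ Finset.Nat.antidiagonalTuple M n, multProb p f * g f
      = Exp p n (fun ω => g (cnt n ω)) := by
  induction n generalizing g with
  | zero =>
    rw [Finset.Nat.antidiagonalTuple_zero_right, Finset.sum_singleton, Exp_zero]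
    have h1 : multProb p 0 = 1 := by simp [multProb, Nat.multinomial]
    have h2 : cnt 0 (fun i : Fin 0 => i.elim0) = (0 : Fin M → ℕ) := by
      funext j; simp [cnt]
    rw [h1, h2, one_mul]
  | succ n ih =>
    rw [Exp_cons]
    have hc : ∀ k, Exp p n (fun ω => g (cnt (n+1) (Fin.cons k ω)))
        = ∑ f ∈ Finset.Nat.antidiagonalTuple M n, multProb p f * g (addk k f) := by
      intro k
      rw [ih (fun f => g (addk k f))]
      have : (fun ω : Fin n → Fin M => g (cnt (n+1) (Fin.cons k ω)))
          = fun ω => g (addk k (cnt n ω)) := funext fun ω => by rw [cnt_cons]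
      rw [this]
    simp only [hc, Finset.mul_sum]
    have hb : ∀ k, ∑ f ∈ Finset.Nat.antidiagonalTuple M n,
        p k * (multProb p f * g (addk k f))
        = ∑ F ∈ (Finset.Nat.antidiagonalTuple M (n+1)).filter (fun F => 1 ≤ F k),
          (p k * multProb p (subk k F)) * g F := by
      intro k
      refine Finset.sum_bij' (fun f _ => addk k f) (fun F _ => subk k F) ?_ ?_ ?_ ?_ ?_
      · intro f hf
        rw [Finset.mem_filter, Finset.Nat.mem_antidiagonalTuple]
        rw [Finset.Nat.mem_antidiagonalTuple] at hf
        refine ⟨by rw [sum_addk, hf], ?_⟩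
        simp [addk]
      · intro F hF
        rw [Finset.mem_filter, Finset.Nat.mem_antidiagonalTuple] at hF
        rw [Finset.Nat.mem_antidiagonalTuple]
        exact sum_subk F k hF.2 n hF.1
      · intro f _; exact subk_addk k f
      · intro F hF
        rw [Finset.mem_filter] at hF
        exact addk_subk k F hF.2
      · intro f _
        rw [subk_addk]
        ring
    simp only [hb]
    have hfilter : ∀ k, ∑ F ∈ (Finset.Nat.antidiagonalTuple M (n+1)).filter
          (fun F => 1 ≤ F k), (p k * multProb p (subk k F)) * g F
        = ∑ F ∈ Finset.Nat.antidiagonalTuple M (n+1),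
          (if 1 ≤ F k then p k * multProb p (subk k F) else 0) * g F := by
      intro k
      rw [Finset.sum_filter]
      exact Finset.sum_congr rfl fun F _ => by by_cases h : 1 ≤ F k <;> simp [h]
    simp only [hfilter]
    rw [Finset.sum_comm]
    refine Finset.sum_congr rfl fun F hF => ?_
    rw [← Finset.sum_mul, pascal_prob p F n (Finset.Nat.mem_antidiagonalTuple.1 hF)]


lemma Exp_one (hsum : ∑ j, p j = 1) (n : ℕ) : Exp p n (fun _ => 1) = 1 := by
  induction n with
  | zero => simp [Exp]
  | succ n ih => rw [Exp_cons]; simp only [ih, mul_one, hsum]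

lemma Exp_add (n : ℕ) (f g : (Fin n → Fin M) → ℝ) :
    Exp p n (fun ω => f ω + g ω) = Exp p n f + Exp p n g := by
  simp [Exp, mul_add, Finset.sum_add_distrib]

lemma Exp_const_mul (n : ℕ) (c : ℝ) (f : (Fin n → Fin M) → ℝ) :
    Exp p n (fun ω => c * f ω) = c * Exp p n f := by
  simp [Exp, Finset.mul_sum, mul_left_comm]

lemma Exp_nonneg (hp : ∀ j, 0 < p j) (n : ℕ) (g : (Fin n → Fin M) → ℝ)
    (hg : ∀ ω, 0 ≤ g ω) : 0 ≤ Exp p n g :=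
  Finset.sum_nonneg fun ω _ => mul_nonneg
    (Finset.prod_nonneg fun i _ => (hp (ω i)).le) (hg ω)

lemma Exp_mono (hp : ∀ j, 0 < p j) (n : ℕ) (f g : (Fin n → Fin M) → ℝ)
    (hfg : ∀ ω, f ω ≤ g ω) : Exp p n f ≤ Exp p n g := by
  have := Exp_nonneg p hp n (fun ω => g ω - f ω) (fun ω => sub_nonneg.2 (hfg ω))
  have h2 : Exp p n (fun ω => g ω - f ω) = Exp p n g - Exp p n f := by
    simp [Exp, mul_sub, Finset.sum_sub_distrib]
  linarith

section moments
variable (h : Fin M → ℝ)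

lemma cons_sum (n : ℕ) (k : Fin M) (ω : Fin n → Fin M) :
    ∑ i : Fin (n+1), h ((Fin.cons k ω : Fin (n+1) → Fin M) i) = h k + ∑ i, h (ω i) := by
  rw [Fin.sum_univ_succ]; simp

lemma Exp_S1 (h0 : ∑ k, p k * h k = 0) (n : ℕ) :
    Exp p n (fun ω => ∑ i, h (ω i)) = 0 := by
  induction n with
  | zero => simp [Exp]
  | succ n ih =>
    rw [Exp_cons]
    have key : ∀ k : Fin M, Exp p n (fun ω => ∑ i : Fin (n+1),
        h ((Fin.cons k ω : Fin (n+1) → Fin M) i)) = h k * Exp p n (fun _ => 1) := by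
      intro k
      have : (fun ω : Fin n → Fin M => ∑ i : Fin (n+1),
          h ((Fin.cons k ω : Fin (n+1) → Fin M) i))
          = fun ω => (∑ i, h (ω i)) + h k * 1 := funext fun ω => by
        rw [cons_sum]; ring
      rw [this, Exp_add, Exp_const_mul, ih]; ring
    simp only [key]
    calc ∑ k, p k * (h k * Exp p n fun _ => 1)
        = (∑ k, p k * h k) * Exp p n (fun _ => 1) := by
          rw [Finset.sum_mul]; exact Finset.sum_congr rfl fun k _ => by ring
      _ = 0 := by rw [h0, zero_mul]

lemma Exp_S2 (hsum : ∑ j, p j = 1) (h0 : ∑ k, p k * h k = 0) (n : ℕ) :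
    Exp p n (fun ω => (∑ i, h (ω i)) ^ 2) = n * (∑ k, p k * h k ^ 2) := by
  induction n with
  | zero => simp [Exp]
  | succ n ih =>
    rw [Exp_cons]
    have key : ∀ k : Fin M, Exp p n (fun ω => (∑ i : Fin (n+1),
        h ((Fin.cons k ω : Fin (n+1) → Fin M) i)) ^ 2)
        = n * (∑ k, p k * h k ^ 2) + h k ^ 2 := by
      intro k
      have : (fun ω : Fin n → Fin M => (∑ i : Fin (n+1),
          h ((Fin.cons k ω : Fin (n+1) → Fin M) i)) ^ 2)
          = fun ω => (∑ i, h (ω i)) ^ 2 +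
            ((2 * h k) * (∑ i, h (ω i)) + (h k ^ 2) * 1) := funext fun ω => by
        rw [cons_sum]; ring
      rw [this, Exp_add, Exp_add, Exp_const_mul, Exp_const_mul, ih, Exp_S1 p h h0,
        Exp_one p hsum]
      ring
    simp only [key, mul_add, Finset.sum_add_distrib, ← Finset.sum_mul]
    rw [hsum]
    push_cast; ring

lemma Exp_S4 (hsum : ∑ j, p j = 1) (h0 : ∑ k, p k * h k = 0) (n : ℕ) :
    Exp p n (fun ω => (∑ i, h (ω i)) ^ 4)
      = n * (∑ k, p k * h k ^ 4) + 3 * n * (n - 1) * (∑ k, p k * h k ^ 2) ^ 2 := by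
  induction n with
  | zero => simp [Exp]
  | succ n ih =>
    rw [Exp_cons]
    set A2 := ∑ k, p k * h k ^ 2 with hA2
    set A4 := ∑ k, p k * h k ^ 4 with hA4
    set E3 := Exp p n (fun ω => (∑ i, h (ω i)) ^ 3) with hE3
    have key : ∀ k : Fin M, Exp p n (fun ω => (∑ i : Fin (n+1),
        h ((Fin.cons k ω : Fin (n+1) → Fin M) i)) ^ 4)
        = (n * A4 + 3 * n * (n - 1) * A2 ^ 2) + (h k * (4 * E3)
          + (h k ^ 2 * (6 * (n * A2)) + h k ^ 4 * 1)) := by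
      intro k
      have : (fun ω : Fin n → Fin M => (∑ i : Fin (n+1),
          h ((Fin.cons k ω : Fin (n+1) → Fin M) i)) ^ 4)
          = fun ω => (∑ i, h (ω i)) ^ 4 +
            ((4 * h k) * (∑ i, h (ω i)) ^ 3 +
             ((6 * h k ^ 2) * (∑ i, h (ω i)) ^ 2 +
              ((4 * h k ^ 3) * (∑ i, h (ω i)) + (h k ^ 4) * 1))) := funext fun ω => by
        rw [cons_sum]; ring
      rw [this, Exp_add, Exp_add, Exp_add, Exp_add, Exp_const_mul, Exp_const_mul,
        Exp_const_mul, Exp_const_mul, ih, Exp_S1 p h h0, Exp_S2 p h hsum h0,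
        Exp_one p hsum]
      ring
    simp only [key, mul_add, Finset.sum_add_distrib, ← Finset.sum_mul]
    have e1 : ∑ k, p k * (h k * (4 * E3)) = (∑ k, p k * h k) * (4 * E3) := by
      rw [Finset.sum_mul]; exact Finset.sum_congr rfl fun k _ => by ring
    have e2 : ∑ k, p k * (h k ^ 2 * (6 * (n * A2))) = A2 * (6 * (n * A2)) := by
      rw [hA2, Finset.sum_mul]; exact Finset.sum_congr rfl fun k _ => by ring
    have e3 : ∑ k, p k * (h k ^ 4 * 1) = A4 := by
      rw [hA4]; exact Finset.sum_congr rfl fun k _ => by ring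
    rw [e1, e2, e3, h0, hsum]
    push_cast; ring


end moments

section analysis

lemma cnt_weight (n : ℕ) (ω : Fin n → Fin M) (c : Fin M → ℝ) :
    ∑ j, (cnt n ω j : ℝ) * c j = ∑ i, c (ω i) := by
  have h1 : ∀ j, (cnt n ω j : ℝ) * c j = ∑ i, (if ω i = j then c j else 0) := by
    intro j
    rw [cnt]
    push_cast
    rw [Finset.sum_mul]
    exact Finset.sum_congr rfl fun i _ => by by_cases h : ω i = j <;> simp [h]
  simp only [h1]
  rw [Finset.sum_comm]
  refine Finset.sum_congr rfl fun i _ => ?_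
  rw [Finset.sum_ite_eq Finset.univ (ω i) c]
  simp

lemma sum_cnt (n : ℕ) (ω : Fin n → Fin M) : ∑ j, (cnt n ω j : ℝ) = n := by
  have := cnt_weight n ω (fun _ => 1)
  simpa using this

lemma psi_nonneg {a x : ℝ} (ha : 0 < a) (hx : 0 ≤ x) :
    0 ≤ x * Real.log x - a * Real.log a - (Real.log a + 1) * (x - a) := by
  rcases eq_or_lt_of_le hx with h0 | hx'
  · rw [← h0]
    simp only [Real.log_zero, zero_mul, zero_sub, mul_neg]
    nlinarith [ha]
  · have key : x * Real.log x - a * Real.log a - (Real.log a + 1) * (x - a)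
        = x * Real.log (x/a) - (x - a) := by
      rw [Real.log_div hx'.ne' ha.ne']; ring
    rw [key]
    have hg := Real.one_sub_inv_le_log_of_pos (div_pos hx' ha)
    have h3 := mul_le_mul_of_nonneg_left hg (le_of_lt hx')
    have h4 : x * (1 - (x/a)⁻¹) = x - a := by field_simp
    linarith [h4 ▸ h3]

lemma psi_le {a x : ℝ} (ha : 0 < a) (hx : 0 ≤ x) :
    x * Real.log x - a * Real.log a - (Real.log a + 1) * (x - a) ≤ (x - a)^2 / a := by
  rcases eq_or_lt_of_le hx with h0 | hx'
  · rw [← h0]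
    simp only [Real.log_zero, zero_mul, zero_sub, mul_neg]
    have h2 : ((-a):ℝ)^2/a = a := by field_simp
    rw [h2]
    nlinarith [ha]
  · have key : x * Real.log x - a * Real.log a - (Real.log a + 1) * (x - a)
        = x * Real.log (x/a) - (x - a) := by
      rw [Real.log_div hx'.ne' ha.ne']; ring
    rw [key]
    have hl := Real.log_le_sub_one_of_pos (div_pos hx' ha)
    have h3 := mul_le_mul_of_nonneg_left hl hx
    have h5 : x * (x/a - 1) - (x - a) = (x-a)^2/a := by field_simp
    linarith [h5 ▸ sub_le_sub_right h3 (x - a)]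

lemma decomp (hsum : ∑ j, p j = 1) {n : ℕ} (hn : 1 ≤ n) (ω : Fin n → Fin M) :
    plugInEntropy n (cnt n ω) - shannonH p
      - (1/(n:ℝ)) * ∑ i, ((∑ j, p j * Real.log (p j)) - Real.log (p (ω i)))
    = -∑ j, (((cnt n ω j : ℝ)/n) * Real.log ((cnt n ω j : ℝ)/n)
        - p j * Real.log (p j)
        - (Real.log (p j) + 1) * ((cnt n ω j : ℝ)/n - p j)) := by
  have hn0 : ((n:ℝ)) ≠ 0 := Nat.cast_ne_zero.2 (by omega)
  have e1 : ∑ j, (cnt n ω j : ℝ)/(n:ℝ) = 1 := by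
    rw [← Finset.sum_div, sum_cnt, div_self hn0]
  have e2 : ∑ j, ((cnt n ω j : ℝ)/(n:ℝ)) * Real.log (p j)
      = (1/(n:ℝ)) * ∑ i, Real.log (p (ω i)) := by
    rw [← cnt_weight n ω (fun j => Real.log (p j)), Finset.mul_sum]
    exact Finset.sum_congr rfl fun j _ => by ring
  have e4 : ∀ j, ((cnt n ω j : ℝ)/(n:ℝ)) * Real.log ((cnt n ω j : ℝ)/n)
        - p j * Real.log (p j)
        - (Real.log (p j) + 1) * ((cnt n ω j : ℝ)/n - p j)
      = ((cnt n ω j : ℝ)/(n:ℝ)) * Real.log ((cnt n ω j : ℝ)/n)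
        - ((cnt n ω j : ℝ)/(n:ℝ)) * Real.log (p j) - (cnt n ω j : ℝ)/(n:ℝ) + p j :=
    fun j => by ring
  rw [Finset.sum_congr rfl (fun j _ => e4 j)]
  simp only [Finset.sum_add_distrib, Finset.sum_sub_distrib, Finset.sum_const,
    Finset.card_univ, Fintype.card_fin, nsmul_eq_mul]
  rw [plugInEntropy, shannonH, e1, e2, hsum]
  field_simp
  ring

lemma Exp_sum (n : ℕ) {κ : Type*} (s : Finset κ) (F : κ → (Fin n → Fin M) → ℝ) :
    Exp p n (fun ω => ∑ j ∈ s, F j ω) = ∑ j ∈ s, Exp p n (F j) := by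
  simp only [Exp, Finset.mul_sum]
  rw [Finset.sum_comm]

lemma Exp_CS (hp : ∀ j, 0 < p j) (n : ℕ) (f g : (Fin n → Fin M) → ℝ) :
    (Exp p n (fun ω => f ω * g ω))^2
      ≤ Exp p n (fun ω => f ω^2) * Exp p n (fun ω => g ω^2) := by
  have hw : ∀ ω : Fin n → Fin M, (0:ℝ) ≤ ∏ i, p (ω i) :=
    fun ω => Finset.prod_nonneg fun i _ => (hp (ω i)).le
  have e1 : Exp p n (fun ω => f ω * g ω)
      = ∑ ω : Fin n → Fin M, (Real.sqrt (∏ i, p (ω i)) * f ω)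
          * (Real.sqrt (∏ i, p (ω i)) * g ω) := by
    refine Finset.sum_congr rfl fun ω _ => ?_
    have : (Real.sqrt (∏ i, p (ω i)) * f ω) * (Real.sqrt (∏ i, p (ω i)) * g ω)
        = (Real.sqrt (∏ i, p (ω i)) * Real.sqrt (∏ i, p (ω i))) * (f ω * g ω) := by ring
    rw [this, Real.mul_self_sqrt (hw ω)]
  have e2 : Exp p n (fun ω => f ω^2)
      = ∑ ω : Fin n → Fin M, (Real.sqrt (∏ i, p (ω i)) * f ω)^2 := by
    refine Finset.sum_congr rfl fun ω _ => ?_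
    rw [mul_pow, Real.sq_sqrt (hw ω)]
  have e3 : Exp p n (fun ω => g ω^2)
      = ∑ ω : Fin n → Fin M, (Real.sqrt (∏ i, p (ω i)) * g ω)^2 := by
    refine Finset.sum_congr rfl fun ω _ => ?_
    rw [mul_pow, Real.sq_sqrt (hw ω)]
  rw [e1, e2, e3]
  exact Finset.sum_mul_sq_le_sq_mul_sq Finset.univ _ _

lemma Exp_q4 (hp : ∀ j, 0 < p j) (hsum : ∑ j, p j = 1) {n : ℕ} (hn : 1 ≤ n) (j : Fin M) :
    Exp p n (fun ω => ((cnt n ω j : ℝ)/(n:ℝ) - p j)^4) ≤ 4 / (n:ℝ)^2 := by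
  have hn0 : (0:ℝ) < (n:ℝ) := by exact_mod_cast Nat.lt_of_lt_of_le Nat.zero_lt_one hn
  have hn1 : (1:ℝ) ≤ (n:ℝ) := by exact_mod_cast hn
  have h0 : ∑ k, p k * ((if k = j then (1:ℝ) else 0) - p j) = 0 := by
    have : ∀ k, p k * ((if k = j then (1:ℝ) else 0) - p j)
        = (if k = j then p k else 0) - p k * p j := by
      intro k; by_cases h : k = j <;> simp [h] <;> ring
    rw [Finset.sum_congr rfl (fun k _ => this k), Finset.sum_sub_distrib,
      Finset.sum_ite_eq' Finset.univ j p, ← Finset.sum_mul, hsum]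
    simp
  have hpt : ∀ ω : Fin n → Fin M, (cnt n ω j : ℝ)/(n:ℝ) - p j
      = (1/(n:ℝ)) * ∑ i, ((if ω i = j then (1:ℝ) else 0) - p j) := by
    intro ω
    have hc : ∑ i : Fin n, (if ω i = j then (1:ℝ) else 0) = (cnt n ω j : ℝ) := by
      rw [cnt]; push_cast; rfl
    rw [Finset.sum_sub_distrib, hc, Finset.sum_const, Finset.card_univ, Fintype.card_fin]
    field_simp
    rw [nsmul_eq_mul]
  have hfun : (fun ω : Fin n → Fin M => ((cnt n ω j : ℝ)/(n:ℝ) - p j)^4)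
      = fun ω => (1/(n:ℝ)^4) * (∑ i, ((if ω i = j then (1:ℝ) else 0) - p j))^4 := by
    funext ω; rw [hpt ω]; ring
  rw [hfun, Exp_const_mul, Exp_S4 p _ hsum h0 n]
  have hp1 : ∀ k, p k ≤ 1 := by
    intro k
    rw [← hsum]
    exact Finset.single_le_sum (fun i _ => (hp i).le) (Finset.mem_univ k)
  have habs : ∀ k, ((if k = j then (1:ℝ) else 0) - p j)^2 ≤ 1 := by
    intro k
    by_cases h : k = j
    · rw [if_pos h]; nlinarith [hp j, hp1 j]
    · rw [if_neg h]; nlinarith [hp j, hp1 j]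
  have hA2 : ∑ k, p k * ((if k = j then (1:ℝ) else 0) - p j)^2 ≤ 1 := by
    have step : ∑ k, p k * ((if k = j then (1:ℝ) else 0) - p j)^2 ≤ ∑ k, p k :=
      Finset.sum_le_sum fun k _ => by nlinarith [hp k, habs k]
    rw [hsum] at step
    exact step
  have hA2nn : 0 ≤ ∑ k, p k * ((if k = j then (1:ℝ) else 0) - p j)^2 :=
    Finset.sum_nonneg fun k _ => mul_nonneg (hp k).le (sq_nonneg _)
  have hA4 : ∑ k, p k * ((if k = j then (1:ℝ) else 0) - p j)^4 ≤ 1 := by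
    have step : ∑ k, p k * ((if k = j then (1:ℝ) else 0) - p j)^4 ≤ ∑ k, p k :=
      Finset.sum_le_sum fun k _ => by
        have hx2 := habs k
        have hx0 := sq_nonneg ((if k = j then (1:ℝ) else 0) - p j)
        have hx4 : ((if k = j then (1:ℝ) else 0) - p j)^4 ≤ 1 := by nlinarith
        nlinarith [hp k]
    rw [hsum] at step
    exact step
  have key : (n:ℝ) * (∑ k, p k * ((if k = j then (1:ℝ) else 0) - p j)^4)
      + 3*(n:ℝ)*((n:ℝ)-1) * (∑ k, p k * ((if k = j then (1:ℝ) else 0) - p j)^2)^2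
      ≤ 4 * (n:ℝ)^2 := by
    have hA22 : (∑ k, p k * ((if k = j then (1:ℝ) else 0) - p j)^2)^2 ≤ 1 := by
      nlinarith [hA2, hA2nn]
    have t1 : (n:ℝ) * (∑ k, p k * ((if k = j then (1:ℝ) else 0) - p j)^4) ≤ (n:ℝ) := by
      nlinarith [hn0, hA4]
    have t2 : 3*(n:ℝ)*((n:ℝ)-1) * (∑ k, p k * ((if k = j then (1:ℝ) else 0) - p j)^2)^2
        ≤ 3*(n:ℝ)*((n:ℝ)-1) := by
      nlinarith [hA22, mul_nonneg hn0.le (sub_nonneg.2 hn1),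
        sq_nonneg (∑ k, p k * ((if k = j then (1:ℝ) else 0) - p j)^2)]
    nlinarith [t1, t2, hn1]
  calc (1/(n:ℝ)^4) * ((n:ℝ) * (∑ k, p k * ((if k = j then (1:ℝ) else 0) - p j)^4)
        + 3*(n:ℝ)*((n:ℝ)-1) * (∑ k, p k * ((if k = j then (1:ℝ) else 0) - p j)^2)^2)
      ≤ (1/(n:ℝ)^4) * (4 * (n:ℝ)^2) := by
        apply mul_le_mul_of_nonneg_left key (by positivity)
    _ = 4 / (n:ℝ)^2 := by field_simp

end analysis

lemma sigma_eq (hsum : ∑ j, p j = 1) :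
    (∑ j, p j * (Real.log (p j))^2) - (shannonH p)^2
      = ∑ k, p k * ((∑ j, p j * Real.log (p j)) - Real.log (p k))^2 := by
  have e : ∀ k, p k * ((∑ j, p j * Real.log (p j)) - Real.log (p k))^2
      = p k * (Real.log (p k))^2
        - (2 * (∑ j, p j * Real.log (p j))) * (p k * Real.log (p k))
        + ((∑ j, p j * Real.log (p j))^2) * p k := fun k => by ring
  rw [Finset.sum_congr rfl fun k _ => e k]
  rw [Finset.sum_add_distrib, Finset.sum_sub_distrib, ← Finset.mul_sum, ← Finset.mul_sum,
    hsum, shannonH]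
  ring

set_option maxHeartbeats 2000000 in
lemma main_bound (hp : ∀ j, 0 < p j) (hsum : ∑ j, p j = 1) {n : ℕ} (hn : 1 ≤ n) :
    |(n:ℝ) * varEntropy M n p - ((∑ j, p j * (Real.log (p j))^2) - (shannonH p)^2)|
      ≤ ((∑ j, p j * (Real.log (p j))^2) - (shannonH p)^2
          + 3 * ((M:ℝ) * ∑ j, 4 / p j^2)) / Real.sqrt n := by
  have hn0 : (0:ℝ) < (n:ℝ) := by exact_mod_cast Nat.lt_of_lt_of_le Nat.zero_lt_one hn
  have hn1 : (1:ℝ) ≤ (n:ℝ) := by exact_mod_cast hn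
  set σ2 := (∑ j, p j * (Real.log (p j))^2) - (shannonH p)^2 with hσ2def
  set K := (M:ℝ) * ∑ j, 4 / p j^2 with hKdef
  have hK0 : 0 ≤ K := by
    rw [hKdef]; positivity
  have hσ2nn : 0 ≤ σ2 := by
    rw [hσ2def, sigma_eq p hsum]
    exact Finset.sum_nonneg fun k _ => mul_nonneg (hp k).le (sq_nonneg _)
  clear_value σ2 K
  -- centered per-trial function
  have h0 : ∑ k, p k * ((∑ j, p j * Real.log (p j)) - Real.log (p k)) = 0 := by
    have e : ∀ k, p k * ((∑ j, p j * Real.log (p j)) - Real.log (p k))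
        = (∑ j, p j * Real.log (p j)) * p k - p k * Real.log (p k) := fun k => by ring
    rw [Finset.sum_congr rfl fun k _ => e k, Finset.sum_sub_distrib, ← Finset.mul_sum, hsum]
    ring
  -- L and D
  set L : (Fin n → Fin M) → ℝ :=
    fun ω => (1/(n:ℝ)) * ∑ i, ((∑ j, p j * Real.log (p j)) - Real.log (p (ω i))) with hLdef
  set D : (Fin n → Fin M) → ℝ :=
    fun ω => plugInEntropy n (cnt n ω) - shannonH p - L ω with hDdef
  clear_value L D
  -- moments of L
  have hL1 : Exp p n L = 0 := by
    rw [hLdef]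
    have := Exp_const_mul p n (1/(n:ℝ))
      (fun ω => ∑ i, ((∑ j, p j * Real.log (p j)) - Real.log (p (ω i))))
    rw [this, Exp_S1 p _ h0, mul_zero]
  have hL2 : Exp p n (fun ω => (L ω)^2) = σ2 / n := by
    have e : (fun ω : Fin n → Fin M => (L ω)^2)
        = fun ω => (1/(n:ℝ)^2) *
            (∑ i, ((∑ j, p j * Real.log (p j)) - Real.log (p (ω i))))^2 := by
      funext ω; rw [hLdef]; ring
    rw [e, Exp_const_mul, Exp_S2 p _ hsum h0, hσ2def, sigma_eq p hsum]
    field_simp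
  -- pointwise bound on D
  have hDle : ∀ ω : Fin n → Fin M,
      (D ω)^2 ≤ (M:ℝ) * ∑ j, ((cnt n ω j : ℝ)/(n:ℝ) - p j)^4 / p j^2 := by
    intro ω
    have hqnn : ∀ j, (0:ℝ) ≤ (cnt n ω j : ℝ)/(n:ℝ) := fun j => by positivity
    have hDeq : D ω = -∑ j, (((cnt n ω j : ℝ)/n) * Real.log ((cnt n ω j : ℝ)/n)
        - p j * Real.log (p j)
        - (Real.log (p j) + 1) * ((cnt n ω j : ℝ)/n - p j)) := by
      rw [hDdef, hLdef]
      exact decomp p hsum hn ω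
    have hψnn : 0 ≤ ∑ j, (((cnt n ω j : ℝ)/n) * Real.log ((cnt n ω j : ℝ)/n)
        - p j * Real.log (p j)
        - (Real.log (p j) + 1) * ((cnt n ω j : ℝ)/n - p j)) :=
      Finset.sum_nonneg fun j _ => psi_nonneg (hp j) (hqnn j)
    have hψle : ∑ j, (((cnt n ω j : ℝ)/n) * Real.log ((cnt n ω j : ℝ)/n)
        - p j * Real.log (p j)
        - (Real.log (p j) + 1) * ((cnt n ω j : ℝ)/n - p j))
        ≤ ∑ j, ((cnt n ω j : ℝ)/n - p j)^2 / p j :=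
      Finset.sum_le_sum fun j _ => psi_le (hp j) (hqnn j)
    have hB2 : (∑ j, ((cnt n ω j : ℝ)/n - p j)^2 / p j)^2
        ≤ (M:ℝ) * ∑ j, (((cnt n ω j : ℝ)/n - p j)^2 / p j)^2 := by
      have := sq_sum_le_card_mul_sum_sq
        (s := (Finset.univ : Finset (Fin M)))
        (f := fun j => ((cnt n ω j : ℝ)/n - p j)^2 / p j)
      simpa using this
    have hterm : ∀ j, (((cnt n ω j : ℝ)/n - p j)^2 / p j)^2
        = ((cnt n ω j : ℝ)/(n:ℝ) - p j)^4 / p j^2 := by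
      intro j
      rw [div_pow]
      congr 1
      ring
    calc (D ω)^2 = (∑ j, (((cnt n ω j : ℝ)/n) * Real.log ((cnt n ω j : ℝ)/n)
        - p j * Real.log (p j)
        - (Real.log (p j) + 1) * ((cnt n ω j : ℝ)/n - p j)))^2 := by rw [hDeq]; ring
      _ ≤ (∑ j, ((cnt n ω j : ℝ)/n - p j)^2 / p j)^2 := by
          exact pow_le_pow_left₀ hψnn hψle 2
      _ ≤ (M:ℝ) * ∑ j, (((cnt n ω j : ℝ)/n - p j)^2 / p j)^2 := hB2
      _ = (M:ℝ) * ∑ j, ((cnt n ω j : ℝ)/(n:ℝ) - p j)^4 / p j^2 := by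
          rw [Finset.sum_congr rfl fun j _ => hterm j]
  -- expectation bound on D²
  have hD2 : Exp p n (fun ω => (D ω)^2) ≤ K / (n:ℝ)^2 := by
    have step1 : Exp p n (fun ω => (D ω)^2)
        ≤ Exp p n (fun ω => (M:ℝ) * ∑ j, ((cnt n ω j : ℝ)/(n:ℝ) - p j)^4 / p j^2) :=
      Exp_mono p hp n _ _ hDle
    have step2 : Exp p n (fun ω => (M:ℝ) * ∑ j, ((cnt n ω j : ℝ)/(n:ℝ) - p j)^4 / p j^2)
        = (M:ℝ) * ∑ j, Exp p n (fun ω => ((cnt n ω j : ℝ)/(n:ℝ) - p j)^4 / p j^2) := by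
      rw [Exp_const_mul, Exp_sum]
    have step3 : ∀ j : Fin M,
        Exp p n (fun ω => ((cnt n ω j : ℝ)/(n:ℝ) - p j)^4 / p j^2)
          ≤ (4/(n:ℝ)^2) / p j ^ 2 := by
      intro j
      have e : (fun ω : Fin n → Fin M => ((cnt n ω j : ℝ)/(n:ℝ) - p j)^4 / p j^2)
          = fun ω => (1 / p j^2) * ((cnt n ω j : ℝ)/(n:ℝ) - p j)^4 := by
        funext ω; ring
      rw [e, Exp_const_mul]
      have h4 := Exp_q4 p hp hsum hn j
      have hpos : (0:ℝ) < 1 / p j ^2 := one_div_pos.2 (pow_pos (hp j) 2)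
      calc (1 / p j^2) * Exp p n (fun ω => ((cnt n ω j : ℝ)/(n:ℝ) - p j)^4)
          ≤ (1 / p j^2) * (4 / (n:ℝ)^2) := by
            apply mul_le_mul_of_nonneg_left h4 hpos.le
        _ = (4/(n:ℝ)^2) / p j ^2 := by ring
    have step4 : (M:ℝ) * ∑ j, Exp p n (fun ω => ((cnt n ω j : ℝ)/(n:ℝ) - p j)^4 / p j^2)
        ≤ (M:ℝ) * ∑ j, (4/(n:ℝ)^2) / p j^2 := by
      apply mul_le_mul_of_nonneg_left (Finset.sum_le_sum fun j _ => step3 j)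
        (by positivity)
    have step5 : (M:ℝ) * ∑ j, (4/(n:ℝ)^2) / p j^2 = K / (n:ℝ)^2 := by
      rw [hKdef, Finset.mul_sum, Finset.mul_sum, Finset.sum_div]
      refine Finset.sum_congr rfl fun j _ => ?_
      field_simp
    calc Exp p n (fun ω => (D ω)^2) ≤ _ := step1
      _ = _ := step2
      _ ≤ _ := step4
      _ = K / (n:ℝ)^2 := step5
  have hb0 : 0 ≤ Exp p n (fun ω => (D ω)^2) :=
    Exp_nonneg p hp n _ (fun ω => sq_nonneg _)
  -- variance identity
  set b := Exp p n (fun ω => (D ω)^2) with hbdef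
  set z := Exp p n (fun ω => L ω * D ω) with hzdef
  set μ := Exp p n D with hμdef
  clear_value b z μ
  have var_eq : (n:ℝ) * varEntropy M n p - σ2
      = 2*(n:ℝ)*z + (n:ℝ)*b - (n:ℝ)*μ^2 := by
    have hbr1 : expEntropy M n p = Exp p n (fun ω => plugInEntropy n (cnt n ω)) := by
      rw [expEntropy]; exact bridge p n _
    have hbr2 : ∑ f ∈ Finset.Nat.antidiagonalTuple M n,
        multProb p f * (plugInEntropy n f)^2
        = Exp p n (fun ω => (plugInEntropy n (cnt n ω))^2) := bridge p n _
    have hX : (fun ω : Fin n → Fin M => plugInEntropy n (cnt n ω))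
        = fun ω => (shannonH p) * 1 + (L ω + D ω) := by
      funext ω; rw [hDdef]; ring
    have hX2 : (fun ω : Fin n → Fin M => (plugInEntropy n (cnt n ω))^2)
        = fun ω => ((shannonH p)^2) * 1 + ((2*shannonH p) * L ω
            + ((2*shannonH p) * D ω + ((L ω)^2 + (2 * (L ω * D ω) + (D ω)^2)))) := by
      funext ω
      have : plugInEntropy n (cnt n ω) = shannonH p + L ω + D ω := by rw [hDdef]; ring
      rw [this]; ring
    have hE1 : Exp p n (fun ω => plugInEntropy n (cnt n ω)) = shannonH p + μ := by
      have key : Exp p n (fun ω => plugInEntropy n (cnt n ω))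
          = shannonH p * Exp p n (fun _ => 1) + (Exp p n L + Exp p n D) := by
        simp only [Exp, Finset.mul_sum, ← Finset.sum_add_distrib]
        refine Finset.sum_congr rfl fun ω _ => ?_
        simp only [hDdef]
        ring
      rw [key, Exp_one p hsum, hL1, ← hμdef]
      ring
    have hE2 : Exp p n (fun ω => (plugInEntropy n (cnt n ω))^2)
        = (shannonH p)^2 + 2*(shannonH p)*μ + σ2/n + 2*z + b := by
      have key : Exp p n (fun ω => (plugInEntropy n (cnt n ω))^2)
          = (shannonH p)^2 * Exp p n (fun _ => 1)
            + ((2*shannonH p) * Exp p n L + ((2*shannonH p) * Exp p n D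
            + (Exp p n (fun ω => L ω ^ 2) + (2 * Exp p n (fun ω => L ω * D ω)
            + Exp p n (fun ω => D ω ^ 2))))) := by
        simp only [Exp, Finset.mul_sum, ← Finset.sum_add_distrib]
        refine Finset.sum_congr rfl fun ω _ => ?_
        simp only [hDdef]
        ring
      rw [key, Exp_one p hsum, hL1, hL2, ← hμdef, ← hzdef, ← hbdef]
      ring
    rw [varEntropy, hbr2, hbr1, hE2, hE1]
    field_simp
    ring
  -- Cauchy-Schwarz bounds
  have hz2 : z^2 ≤ (σ2/(n:ℝ)) * b := by
    have := Exp_CS p hp n L D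
    rw [← hzdef, hL2, ← hbdef] at this
    exact this
  have hμ2 : μ^2 ≤ b := by
    have hcs := Exp_CS p hp n (fun _ => (1:ℝ)) D
    have e1 : (fun ω : Fin n → Fin M => (1:ℝ) * D ω) = D := by funext ω; ring
    have e2 : (fun ω : Fin n → Fin M => ((1:ℝ))^2) = fun _ => (1:ℝ) := by
      funext ω; ring
    rw [e1, e2, Exp_one p hsum, one_mul, ← hμdef, ← hbdef] at hcs
    exact hcs
  -- arithmetic wrap-up with t = √n
  set t := Real.sqrt n with htdef
  have ht0 : 0 < t := Real.sqrt_pos.2 hn0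
  have ht2 : t^2 = (n:ℝ) := Real.sq_sqrt hn0.le
  have ht1 : 1 ≤ t := by nlinarith [ht0, ht2, hn1]
  have htn : t ≤ (n:ℝ) := by nlinarith [ht0, ht2, ht1]
  clear_value t
  have hn2b : (n:ℝ)^2 * b ≤ K := by
    have := mul_le_mul_of_nonneg_left hD2 (by positivity : (0:ℝ) ≤ (n:ℝ)^2)
    calc (n:ℝ)^2 * b ≤ (n:ℝ)^2 * (K/(n:ℝ)^2) := this
      _ = K := by field_simp
  have hz' : (n:ℝ) * z^2 ≤ σ2 * b := by
    have := mul_le_mul_of_nonneg_left hz2 hn0.le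
    calc (n:ℝ)*z^2 ≤ (n:ℝ)*((σ2/(n:ℝ))*b) := this
      _ = σ2 * b := by field_simp
  have he : (2*(n:ℝ)*z*t)^2 = 4*(n:ℝ)^2*((n:ℝ)*z^2) := by
    calc (2*(n:ℝ)*z*t)^2 = 4*(n:ℝ)^2*z^2*t^2 := by ring
      _ = 4*(n:ℝ)^2*z^2*(n:ℝ) := by rw [ht2]
      _ = 4*(n:ℝ)^2*((n:ℝ)*z^2) := by ring
  have hsq : (2*(n:ℝ)*z*t)^2 ≤ ((n:ℝ)^2*b + σ2)^2 := by
    rw [he]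
    nlinarith [hz', sq_nonneg ((n:ℝ)^2*b - σ2), sq_nonneg (n:ℝ), hn0.le,
      mul_le_mul_of_nonneg_left hz' (by positivity : (0:ℝ) ≤ 4*(n:ℝ)^2)]
  have habs1 : |2*(n:ℝ)*z*t| ≤ (n:ℝ)^2*b + σ2 := by
    have hpos : (0:ℝ) ≤ (n:ℝ)^2*b + σ2 :=
      add_nonneg (mul_nonneg (sq_nonneg _) hb0) hσ2nn
    have h1 := Real.sqrt_le_sqrt hsq
    rwa [Real.sqrt_sq_eq_abs, Real.sqrt_sq hpos] at h1
  rw [var_eq, le_div_iff₀ ht0]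
  have split : (2*(n:ℝ)*z + (n:ℝ)*b - (n:ℝ)*μ^2) * t
      = 2*(n:ℝ)*z*t + ((n:ℝ)*(b - μ^2))*t := by ring
  have hbμ : |((n:ℝ)*(b - μ^2))*t| = ((n:ℝ)*(b - μ^2))*t :=
    abs_of_nonneg (mul_nonneg (mul_nonneg hn0.le (sub_nonneg.2 hμ2)) ht0.le)
  calc |2*(n:ℝ)*z + (n:ℝ)*b - (n:ℝ)*μ^2| * t
      = |(2*(n:ℝ)*z + (n:ℝ)*b - (n:ℝ)*μ^2) * t| := by
        rw [abs_mul, abs_of_pos ht0]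
    _ = |2*(n:ℝ)*z*t + ((n:ℝ)*(b - μ^2))*t| := by rw [split]
    _ ≤ |2*(n:ℝ)*z*t| + |((n:ℝ)*(b - μ^2))*t| := abs_add_le _ _
    _ ≤ ((n:ℝ)^2*b + σ2) + ((n:ℝ)*(b - μ^2))*t := by
        rw [hbμ]; exact add_le_add_left habs1 _
    _ ≤ σ2 + 3*K := by
        nlinarith [hn2b, hK0, hσ2nn, hb0, ht0.le, htn, hμ2, sq_nonneg μ,
          mul_nonneg (mul_nonneg hn0.le hb0) (sub_nonneg.2 htn),
          mul_nonneg (mul_nonneg hn0.le (sq_nonneg μ)) ht0.le]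

end VarEnt

/-- Leading term of the variance of the plug-in entropy estimator:
`n · Var(Ĥ) → ∑ⱼ pⱼ ln² pⱼ - H²`; in the equiprobable case this limit is zero. -/
theorem varEntropy_leading (M : ℕ) (p : Fin M → ℝ)
    (hp : ∀ j, 0 < p j) (hsum : ∑ j, p j = 1) :
    Filter.Tendsto (fun n : ℕ => (n : ℝ) * varEntropy M n p) Filter.atTop
      (nhds ((∑ j, p j * (Real.log (p j)) ^ 2) - (shannonH p) ^ 2)) ∧
    ((∀ j, p j = 1 / (M : ℝ)) →
      (∑ j, p j * (Real.log (p j)) ^ 2) - (shannonH p) ^ 2 = 0) := by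
  constructor
  · -- the limit statement
    have hsqrt : Filter.Tendsto (fun n : ℕ => Real.sqrt n) Filter.atTop Filter.atTop := by
      apply Filter.tendsto_atTop_atTop_of_monotone
      · exact fun a b hab => Real.sqrt_le_sqrt (Nat.cast_le.2 hab)
      · intro c
        rcases le_or_gt c 0 with hc | hc
        · exact ⟨0, hc.trans (Real.sqrt_nonneg _)⟩
        · refine ⟨Nat.ceil (c^2), ?_⟩
          calc c = Real.sqrt (c^2) := (Real.sqrt_sq hc.le).symm
            _ ≤ Real.sqrt (Nat.ceil (c^2) : ℝ) := Real.sqrt_le_sqrt (Nat.le_ceil _)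
    have hg : Filter.Tendsto (fun n : ℕ =>
        ((∑ j, p j * (Real.log (p j)) ^ 2) - (shannonH p) ^ 2
          + 3 * ((M:ℝ) * ∑ j, 4 / p j^2)) / Real.sqrt n) Filter.atTop (nhds 0) :=
      Filter.Tendsto.div_atTop tendsto_const_nhds hsqrt
    have key : Filter.Tendsto (fun n : ℕ => (n : ℝ) * varEntropy M n p
        - ((∑ j, p j * (Real.log (p j)) ^ 2) - (shannonH p) ^ 2))
        Filter.atTop (nhds 0) := by
      apply squeeze_zero_norm' ?_ hg
      filter_upwards [Filter.eventually_ge_atTop 1] with n hn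
      have := VarEnt.main_bound p hp hsum hn
      simpa [Real.norm_eq_abs] using this
    exact tendsto_sub_nhds_zero_iff.mp key
  · -- the equiprobable case
    intro heq
    have hM : 0 < M := by
      rcases Nat.eq_zero_or_pos M with h | h
      · exfalso
        subst h
        simp at hsum
      · exact h
    have hM0 : (0:ℝ) < (M:ℝ) := by exact_mod_cast hM
    have hlog : ∀ j, Real.log (p j) = - Real.log M := by
      intro j
      rw [heq j, one_div, Real.log_inv]
    have h1 : ∑ j, p j * (Real.log (p j))^2 = (Real.log M)^2 := by
      have e : ∀ j : Fin M, p j * (Real.log (p j))^2 = p j * (Real.log M)^2 := by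
        intro j; rw [hlog j]; ring
      rw [Finset.sum_congr rfl fun j _ => e j, ← Finset.sum_mul, hsum, one_mul]
    have h2 : shannonH p = Real.log M := by
      rw [shannonH]
      have e : ∀ j : Fin M, p j * Real.log (p j) = -(p j * Real.log M) := by
        intro j; rw [hlog j]; ring
      rw [Finset.sum_congr rfl fun j _ => e j, Finset.sum_neg_distrib, ← Finset.sum_mul,
        hsum, one_mul, neg_neg]
    rw [h1, h2]
    ring
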